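/- Let Σ̃ ∈ ℝ^{p×p} be symmetric positive semidefinite and Σ ∈ ℝ^{p×p} be positive definite with Ω = Σ^{−1}. Fix j and let T = {i : Ω_{ij} ≠ 0} with s_j = |T|, and suppose λ_j ≥ ‖(Σ̃ − Σ)Ω_{·,j}‖_∞. Then the program min{ ‖w‖₁ : ‖Σ̃w − e_j‖_∞ ≤ λ_j } is feasible (Ω_{·,j} is feasible), and any solution w̃_j satisfies: (i) ‖w̃_j‖₁ ≤ ‖Ω_{·,j}‖₁; (ii) h = w̃_j − Ω_{·,j} obeys the cone condition ‖h_{T^c}‖₁ ≤ ‖h_T‖₁ and ‖Σ̃h‖_∞ ≤ 2λ_j. If in addition there is κ > 0 with κ‖v‖₂² ≤ vᵀΣ̃v for every v ∈ ℝ^p satisfying ‖v_{T^c}‖₁ ≤ ‖v_T‖₁, then ‖w̃_j − Ω_{·,j}‖₂ ≤ 4λ_j√(s_j)/κ and ‖w̃_j − Ω_{·,j}‖₁ ≤ 8λ_j·s_j/κ. -/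

import Mathlib

open MeasureTheory ProbabilityTheory Filter Matrix Real Topology
open scoped ENNReal NNReal

noncomputable section

namespace ProxyData

def l0 {p : ℕ} (v : Fin p → ℝ) : ℕ := (Function.support v).ncard

def l1 {p : ℕ} (v : Fin p → ℝ) : ℝ := ∑ i, |v i|

def l2sq {p : ℕ} (v : Fin p → ℝ) : ℝ := ∑ i, (v i) ^ 2

def linf {p : ℕ} (v : Fin p → ℝ) : ℝ := ⨆ i, |v i|

/-- The old `Matrix.PosSemidef.sqrt` (removed from Mathlib), spelled out. -/
def psdSqrt {p : ℕ} {S : Matrix (Fin p) (Fin p) ℝ} (hS : S.PosSemidef) :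
    Matrix (Fin p) (Fin p) ℝ :=
  (hS.1.eigenvectorUnitary : Matrix (Fin p) (Fin p) ℝ) *
    diagonal ((↑) ∘ (Real.sqrt ·) ∘ hS.1.eigenvalues) *
    (star hS.1.eigenvectorUnitary : Matrix (Fin p) (Fin p) ℝ)

def gaussianVec {p : ℕ} (S : Matrix (Fin p) (Fin p) ℝ) (hS : S.PosSemidef) :
    Measure (Fin p → ℝ) :=
  (Measure.pi fun _ : Fin p => gaussianReal 0 1).map fun z => psdSqrt hS *ᵥ z

def EigBounds {p : ℕ} (S : Matrix (Fin p) (Fin p) ℝ) (C₁ : ℝ) : Prop :=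
  S.IsSymm ∧ ∀ v : Fin p → ℝ, C₁⁻¹ * l2sq v ≤ v ⬝ᵥ S *ᵥ v ∧ v ⬝ᵥ S *ᵥ v ≤ C₁ * l2sq v

def SubGaussianLaw (ν : Measure ℝ) (K : ℝ) : Prop :=
  ∀ l : ℕ, 1 ≤ l → (∫ x, |x| ^ l ∂ν) ^ ((l : ℝ)⁻¹) ≤ K * Real.sqrt l

def NoiseLaw (ν : Measure ℝ) (σ K : ℝ) : Prop :=
  IsProbabilityMeasure ν ∧ Integrable (fun x => x) ν ∧ Integrable (fun x => x ^ 2) ν ∧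
    (∫ x, x ∂ν) = 0 ∧ (∫ x, x ^ 2 ∂ν) = σ ^ 2 ∧ SubGaussianLaw ν K

abbrev SampleSpace (p n m : ℕ) :=
  (Fin n → Fin p → ℝ) × (Fin n → ℝ) × (Fin m → Fin p → ℝ)

def modelMeasure {p : ℕ} (n m : ℕ) (S : Matrix (Fin p) (Fin p) ℝ) (hS : S.PosSemidef)
    (ν : Measure ℝ) : Measure (SampleSpace p n m) :=
  (Measure.pi fun _ : Fin n => gaussianVec S hS).prod
    ((Measure.pi fun _ : Fin n => ν).prod (Measure.pi fun _ : Fin m => gaussianVec S hS))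

def yVal {p n m : ℕ} (β : Fin p → ℝ) (ω : SampleSpace p n m) (i : Fin n) : ℝ :=
  (∑ j, ω.1 i j * β j) + ω.2.1 i

def Shat {p n m : ℕ} (β : Fin p → ℝ) (ω : SampleSpace p n m) : Fin p → ℝ :=
  fun j => (∑ i, ω.1 i j * yVal β ω i) / n

def SigTilde {p n m : ℕ} (ω : SampleSpace p n m) : Matrix (Fin p) (Fin p) ℝ :=
  fun j k => (∑ i, ω.2.2 i j * ω.2.2 i k) / m

def gammaNN {p : ℕ} (S : Matrix (Fin p) (Fin p) ℝ) (β : Fin p → ℝ) (σ : ℝ) (n m : ℕ) : ℝ :=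
  σ ^ 2 + (β ⬝ᵥ S *ᵥ β) * ((n : ℝ) / m + 1)

def lassoObj {p : ℕ} (A : Matrix (Fin p) (Fin p) ℝ) (s : Fin p → ℝ) (lam : ℝ)
    (b : Fin p → ℝ) : ℝ :=
  (1 / 2) * (b ⬝ᵥ A *ᵥ b) - b ⬝ᵥ s + lam * l1 b

def IsLassoSol {p : ℕ} (A : Matrix (Fin p) (Fin p) ℝ) (s : Fin p → ℝ) (lam : ℝ)
    (bhat : Fin p → ℝ) : Prop :=
  ∀ b, lassoObj A s lam bhat ≤ lassoObj A s lam b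

def DantzigFeas {p : ℕ} (A : Matrix (Fin p) (Fin p) ℝ) (t : Fin p → ℝ) (lam : ℝ)
    (w : Fin p → ℝ) : Prop :=
  linf (fun i => (A *ᵥ w) i - t i) ≤ lam

def IsDantzigSol {p : ℕ} (A : Matrix (Fin p) (Fin p) ℝ) (t : Fin p → ℝ) (lam : ℝ)
    (w : Fin p → ℝ) : Prop :=
  DantzigFeas A t lam w ∧ ∀ w', DantzigFeas A t lam w' → l1 w ≤ l1 w'

def stdNormalCDF (t : ℝ) : ℝ := (gaussianReal 0 1 (Set.Iic t)).toReal

def BigOP {Ωs : ℕ → Type*} [∀ k, MeasurableSpace (Ωs k)] (μ : ∀ k, Measure (Ωs k))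
    (X : ∀ k, Ωs k → ℝ) (r : ℕ → ℝ) : Prop :=
  ∀ ε : ℝ, 0 < ε → ∃ C : ℝ, 0 < C ∧
    ∀ᶠ k in atTop, (μ k {ω | C * r k < |X k ω|}).toReal ≤ ε

def TendstoStdNormal {Ωs : ℕ → Type*} [∀ k, MeasurableSpace (Ωs k)] (μ : ∀ k, Measure (Ωs k))
    (X : ∀ k, Ωs k → ℝ) : Prop :=
  ∀ t : ℝ, Tendsto (fun k => (μ k {ω | X k ω ≤ t}).toReal) atTop (𝓝 (stdNormalCDF t))

def omegaCol {p : ℕ} (S : Matrix (Fin p) (Fin p) ℝ) (j : Fin p) : Fin p → ℝ := fun i => S⁻¹ i j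

def zstat {p n m : ℕ} (S : Matrix (Fin p) (Fin p) ℝ) (β : Fin p → ℝ) (j : Fin p)
    (ω : SampleSpace p n m) : ℝ :=
  omegaCol S j ⬝ᵥ (fun i => Shat β ω i - (S *ᵥ β) i)
    + omegaCol S j ⬝ᵥ ((S - SigTilde ω) *ᵥ β)

def Vts {p : ℕ} (S : Matrix (Fin p) (Fin p) ℝ) (β : Fin p → ℝ) (σ : ℝ) (n m : ℕ)
    (j : Fin p) : ℝ :=
  S⁻¹ j j * gammaNN S β σ n m / n + (β j) ^ 2 / n + (β j) ^ 2 / m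


lemma l1_nonneg {p : ℕ} (v : Fin p → ℝ) : 0 ≤ l1 v :=
  Finset.sum_nonneg fun _ _ => abs_nonneg _

lemma l2sq_nonneg {p : ℕ} (v : Fin p → ℝ) : 0 ≤ l2sq v :=
  Finset.sum_nonneg fun _ _ => sq_nonneg _

lemma linf_nonneg {p : ℕ} (v : Fin p → ℝ) : 0 ≤ linf v :=
  Real.iSup_nonneg fun _ => abs_nonneg _

lemma linf_le {p : ℕ} {v : Fin p → ℝ} {c : ℝ} (hc : 0 ≤ c) (h : ∀ i, |v i| ≤ c) :
    linf v ≤ c := Real.iSup_le h hc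

lemma abs_le_linf {p : ℕ} (v : Fin p → ℝ) (i : Fin p) : |v i| ≤ linf v :=
  le_ciSup (f := fun i => |v i|) (Set.Finite.bddAbove (Set.finite_range _)) i

lemma l1_split {p : ℕ} (T : Set (Fin p)) (v : Fin p → ℝ) :
    l1 v = l1 (T.indicator v) + l1 (Tᶜ.indicator v) := by
  unfold l1
  rw [← Finset.sum_add_distrib]
  refine Finset.sum_congr rfl fun i _ => ?_
  by_cases h : i ∈ T <;> simp [Set.indicator_apply, h]

lemma dot_le {p : ℕ} (v u : Fin p → ℝ) : v ⬝ᵥ u ≤ l1 v * linf u := by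
  unfold dotProduct l1
  rw [Finset.sum_mul]
  refine Finset.sum_le_sum fun i _ => ?_
  calc v i * u i ≤ |v i * u i| := le_abs_self _
  _ = |v i| * |u i| := abs_mul _ _
  _ ≤ |v i| * linf u := mul_le_mul_of_nonneg_left (abs_le_linf u i) (abs_nonneg _)

lemma l1_indicator_cs {p : ℕ} (T : Set (Fin p)) (v : Fin p → ℝ) :
    l1 (T.indicator v) ≤ Real.sqrt T.ncard * Real.sqrt (l2sq v) := by
  classical
  have hfin : T.Finite := Set.toFinite T
  set Tf : Finset (Fin p) := hfin.toFinset with hTf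
  have hcard : T.ncard = Tf.card := Set.ncard_eq_toFinset_card T hfin
  have h1 : l1 (T.indicator v) = ∑ i ∈ Tf, |v i| := by
    unfold l1
    rw [← Finset.univ_inter Tf, ← Finset.sum_ite_mem]
    refine Finset.sum_congr rfl fun i _ => ?_
    by_cases h : i ∈ T
    · rw [Set.indicator_of_mem h, if_pos (hfin.mem_toFinset.2 h)]
    · rw [Set.indicator_of_notMem h, abs_zero,
        if_neg (fun hc => h (hfin.mem_toFinset.1 hc))]
  have hnn : (0:ℝ) ≤ ∑ i ∈ Tf, |v i| := Finset.sum_nonneg fun _ _ => abs_nonneg _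
  rw [h1, hcard]
  calc ∑ i ∈ Tf, |v i| = Real.sqrt ((∑ i ∈ Tf, |v i|) ^ 2) := (Real.sqrt_sq hnn).symm
  _ ≤ Real.sqrt ((Tf.card : ℝ) * ∑ i ∈ Tf, v i ^ 2) := by
      apply Real.sqrt_le_sqrt
      have := sq_sum_le_card_mul_sum_sq (s := Tf) (f := fun i => |v i|)
      simpa [sq_abs] using this
  _ ≤ Real.sqrt ((Tf.card : ℝ) * l2sq v) := by
      apply Real.sqrt_le_sqrt
      apply mul_le_mul_of_nonneg_left _ (Nat.cast_nonneg _)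
      exact Finset.sum_le_sum_of_subset_of_nonneg (Finset.subset_univ _)
        fun i _ _ => sq_nonneg _
  _ = Real.sqrt (Tf.card : ℝ) * Real.sqrt (l2sq v) := Real.sqrt_mul (Nat.cast_nonneg _) _


/-- the deterministic lemma for the Dantzig-type correction score.
If `λ_j ≥ ‖(Σ̃ − Σ)Ω_{·,j}‖_∞` then `Ω_{·,j}` is feasible for the program
`min ‖w‖₁ s.t. ‖Σ̃w − e_j‖_∞ ≤ λ_j`, and any solution `w̃_j` satisfies
`‖w̃_j‖₁ ≤ ‖Ω_{·,j}‖₁`, the cone condition `‖h_{T^c}‖₁ ≤ ‖h_T‖₁` and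
`‖Σ̃h‖_∞ ≤ 2λ_j` for `h = w̃_j − Ω_{·,j}`, `T = supp(Ω_{·,j})`; under a restricted
eigenvalue condition for `Σ̃`, also `‖h‖₂ ≤ 4λ_j√(s_j)/κ` and `‖h‖₁ ≤ 8λ_j s_j/κ`. -/
theorem statement_16 {p : ℕ} (St : Matrix (Fin p) (Fin p) ℝ) (hSt : St.PosSemidef)
    (S : Matrix (Fin p) (Fin p) ℝ) (hS : S.PosDef) (j : Fin p) (lamj : ℝ)
    (hfeas : linf ((St - S) *ᵥ omegaCol S j) ≤ lamj) :
    -- `Ω_{·,j}` is feasible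
    DantzigFeas St (fun i => if i = j then 1 else 0) lamj (omegaCol S j) ∧
    ∀ w : Fin p → ℝ, IsDantzigSol St (fun i => if i = j then 1 else 0) lamj w →
      -- (i) `‖w̃_j‖₁ ≤ ‖Ω_{·,j}‖₁`
      l1 w ≤ l1 (omegaCol S j) ∧
      -- (ii) cone condition and `‖Σ̃h‖_∞ ≤ 2λ_j` for `h = w̃_j − Ω_{·,j}`
      (l1 ((Function.support (omegaCol S j))ᶜ.indicator fun i => w i - omegaCol S j i)
          ≤ l1 ((Function.support (omegaCol S j)).indicator fun i => w i - omegaCol S j i)) ∧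
      linf (St *ᵥ fun i => w i - omegaCol S j i) ≤ 2 * lamj ∧
      -- (iii) bounds under the restricted eigenvalue condition
      (∀ κ : ℝ, 0 < κ →
        (∀ v : Fin p → ℝ,
          l1 ((Function.support (omegaCol S j))ᶜ.indicator v)
              ≤ l1 ((Function.support (omegaCol S j)).indicator v) →
          κ * l2sq v ≤ v ⬝ᵥ St *ᵥ v) →
        Real.sqrt (l2sq fun i => w i - omegaCol S j i)
            ≤ 4 * lamj * Real.sqrt (l0 (omegaCol S j)) / κ ∧
        l1 (fun i => w i - omegaCol S j i) ≤ 8 * lamj * (l0 (omegaCol S j)) / κ) := by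
  classical
  set Ω := omegaCol S j with hΩdef
  set T := Function.support Ω with hTdef
  set e : Fin p → ℝ := fun i => if i = j then 1 else 0 with he
  have hSO : S *ᵥ Ω = e := by
    funext i
    have hdet : IsUnit S.det := hS.det_pos.ne'.isUnit
    have hinv : S * S⁻¹ = 1 := Matrix.mul_nonsing_inv S hdet
    have h1 : (S *ᵥ Ω) i = (S * S⁻¹) i j := by
      simp [Matrix.mulVec, Matrix.mul_apply, hΩdef, omegaCol, dotProduct]
    rw [h1, hinv]
    simp [Matrix.one_apply, he]
  have hfeasΩ : DantzigFeas St e lamj Ω := by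
    unfold DantzigFeas
    have heq : (fun i => (St *ᵥ Ω) i - e i) = (St - S) *ᵥ Ω := by
      funext i
      rw [Matrix.sub_mulVec]
      simp [hSO]
    rw [heq]
    exact hfeas
  have hlam0 : 0 ≤ lamj := le_trans (linf_nonneg _) hfeas
  refine ⟨hfeasΩ, fun w hw => ?_⟩
  have hl1w : l1 w ≤ l1 Ω := hw.2 Ω hfeasΩ
  set h : Fin p → ℝ := fun i => w i - Ω i with hh
  -- indicator facts
  have hTc_eq : Tᶜ.indicator h = Tᶜ.indicator w := by
    funext i
    by_cases hi : i ∈ T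
    · rw [Set.indicator_of_notMem (by simpa using hi),
        Set.indicator_of_notMem (by simpa using hi)]
    · have hΩ0 : Ω i = 0 := Function.notMem_support.1 hi
      rw [Set.indicator_of_mem (by simpa using hi), Set.indicator_of_mem (by simpa using hi)]
      simp [hh, hΩ0]
  have hΩTc : l1 (Tᶜ.indicator Ω) = 0 := by
    have : Tᶜ.indicator Ω = 0 := by
      funext i
      by_cases hi : i ∈ T
      · rw [Set.indicator_of_notMem (by simpa using hi)]; rfl
      · rw [Set.indicator_of_mem (by simpa using hi)]
        exact Function.notMem_support.1 hi
    rw [this]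
    simp [l1]
  have htri : l1 (T.indicator Ω) ≤ l1 (T.indicator w) + l1 (T.indicator h) := by
    unfold l1
    rw [← Finset.sum_add_distrib]
    refine Finset.sum_le_sum fun i _ => ?_
    by_cases hi : i ∈ T
    · rw [Set.indicator_of_mem hi, Set.indicator_of_mem hi, Set.indicator_of_mem hi]
      have : Ω i = w i - h i := by simp [hh]
      rw [this]
      exact abs_sub _ _
    · rw [Set.indicator_of_notMem hi, Set.indicator_of_notMem hi,
        Set.indicator_of_notMem hi]
      simp
  have hΩ_split := l1_split T Ω
  have hw_split := l1_split T w
  have hh_split := l1_split T h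
  have hTc_eq' : l1 (Tᶜ.indicator h) = l1 (Tᶜ.indicator w) := by rw [hTc_eq]
  have hcone : l1 (Tᶜ.indicator h) ≤ l1 (T.indicator h) := by linarith
  -- linf bound
  have hStH : linf (St *ᵥ h) ≤ 2 * lamj := by
    apply linf_le (by linarith)
    intro i
    have h1 : |(St *ᵥ w) i - e i| ≤ lamj :=
      le_trans (abs_le_linf (fun i => (St *ᵥ w) i - e i) i) hw.1
    have h2 : |(St *ᵥ Ω) i - e i| ≤ lamj :=
      le_trans (abs_le_linf (fun i => (St *ᵥ Ω) i - e i) i) hfeasΩ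
    have hsub : (St *ᵥ h) i = ((St *ᵥ w) i - e i) - ((St *ᵥ Ω) i - e i) := by
      simp [hh, Matrix.mulVec, dotProduct, mul_sub, Finset.sum_sub_distrib]
    rw [hsub]
    calc |((St *ᵥ w) i - e i) - ((St *ᵥ Ω) i - e i)|
        ≤ |(St *ᵥ w) i - e i| + |(St *ᵥ Ω) i - e i| := abs_sub _ _
    _ ≤ 2 * lamj := by linarith
  refine ⟨hl1w, hcone, hStH, ?_⟩
  intro κ hκ hRE
  have hREh : κ * l2sq h ≤ h ⬝ᵥ St *ᵥ h := hRE h hcone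
  set r := Real.sqrt (l2sq h) with hr
  set s := Real.sqrt (l0 Ω) with hs
  have hs0 : 0 ≤ s := Real.sqrt_nonneg _
  have hr0 : 0 ≤ r := Real.sqrt_nonneg _
  have hrsq : r ^ 2 = l2sq h := Real.sq_sqrt (l2sq_nonneg h)
  have hl1h : l1 h ≤ 2 * (s * r) := by
    have hcs := l1_indicator_cs T h
    have hcard : (T.ncard : ℝ) = ((l0 Ω : ℕ) : ℝ) := by rw [hTdef]; rfl
    rw [hcard] at hcs
    linarith
  have hdot : h ⬝ᵥ St *ᵥ h ≤ l1 h * (2 * lamj) :=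
    le_trans (dot_le _ _) (mul_le_mul_of_nonneg_left hStH (l1_nonneg _))
  have key : κ * r ^ 2 ≤ 4 * lamj * s * r := by
    rw [hrsq]
    have : l1 h * (2 * lamj) ≤ (2 * (s * r)) * (2 * lamj) := by
      apply mul_le_mul_of_nonneg_right hl1h (by linarith)
    nlinarith
  have goal1 : r ≤ 4 * lamj * s / κ := by
    rcases eq_or_lt_of_le hr0 with hrz | hrpos
    · rw [← hrz]
      positivity
    · rw [le_div_iff₀ hκ]
      nlinarith
  refine ⟨goal1, ?_⟩
  have hss : s * s = (l0 Ω : ℝ) := Real.mul_self_sqrt (Nat.cast_nonneg _)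
  calc l1 h ≤ 2 * (s * r) := hl1h
  _ ≤ 2 * (s * (4 * lamj * s / κ)) := by
      apply mul_le_mul_of_nonneg_left _ (by norm_num)
      exact mul_le_mul_of_nonneg_left goal1 hs0
  _ = 8 * lamj * (s * s) / κ := by ring
  _ = 8 * lamj * (l0 Ω : ℝ) / κ := by rw [hss]

end ProxyData
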